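/- P(A₂⊗R) = ((1−ν)A₂)⊗R + A₂⊗R₃ as submodules of A₂⊗R. -/

import Mathlib

open TensorProduct

/-- The bilinear form of the `A₂` root lattice realized on `ℤ²` with Gram
matrix `[[2,−1],[−1,2]]`. -/
def B2 (v w : ℤ × ℤ) : ℤ :=
  2 * v.1 * w.1 - v.1 * w.2 - v.2 * w.1 + 2 * v.2 * w.2

/-- The order-3 isometry `ν(x,y) = (−y, x−y)` of the `A₂` lattice. -/
def nuA2 : (ℤ × ℤ) →ₗ[ℤ] (ℤ × ℤ) where
  toFun p := (-p.2, p.1 - p.2)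
  map_add' p q := by ext <;> dsimp <;> ring
  map_smul' c p := by ext <;> dsimp <;> ring

lemma b2_dvd (p q : ℤ × ℤ) :
    (3 : ℤ) ∣ B2 ((LinearMap.id - nuA2 : (ℤ × ℤ) →ₗ[ℤ] (ℤ × ℤ)) p) q := by
  refine ⟨p.1 * q.1 + (p.2 - p.1) * q.2, ?_⟩
  simp only [LinearMap.sub_apply, LinearMap.id_apply, nuA2, LinearMap.coe_mk,
    AddHom.coe_mk, B2, Prod.fst_sub, Prod.snd_sub]
  ring

lemma decomp {R : Type*} [AddCommGroup R] [Module ℤ R] (x : (ℤ × ℤ) ⊗[ℤ] R) :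
    ∃ r1 r2 : R, x = ((1,0) : ℤ × ℤ) ⊗ₜ[ℤ] r1 + ((0,1) : ℤ × ℤ) ⊗ₜ[ℤ] r2 := by
  induction x using TensorProduct.induction_on with
  | zero => exact ⟨0, 0, by simp⟩
  | tmul a r =>
    refine ⟨a.1 • r, a.2 • r, ?_⟩
    have ha : a = a.1 • ((1,0) : ℤ × ℤ) + a.2 • ((0,1) : ℤ × ℤ) := by
      ext <;> simp
    conv_lhs => rw [ha]
    have hs : ∀ (n : ℤ) (x : ℤ × ℤ), (n • x) ⊗ₜ[ℤ] r = x ⊗ₜ[ℤ] (n • r) := by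
      intro n x
      induction n using Int.induction_on with
      | zero => simp
      | succ k ih => rw [add_smul, add_zsmul, one_smul, one_zsmul, TensorProduct.add_tmul,
          TensorProduct.tmul_add, ih]
      | pred k ih => rw [sub_smul, sub_zsmul, one_smul, one_zsmul, TensorProduct.sub_tmul,
          ← sub_eq_add_neg, TensorProduct.tmul_sub, ih]
    rw [TensorProduct.add_tmul, hs a.1 ((1,0) : ℤ × ℤ), hs a.2 ((0,1) : ℤ × ℤ)]
  | add x y hx hy =>
    obtain ⟨r1, r2, hx⟩ := hx
    obtain ⟨s1, s2, hy⟩ := hy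
    exact ⟨r1 + s1, r2 + s2, by
      rw [hx, hy, TensorProduct.tmul_add, TensorProduct.tmul_add]; abel⟩

theorem stmt_13 (R : Type*) [AddCommGroup R] [Module ℤ R]
    (BR : R →ₗ[ℤ] R →ₗ[ℤ] ℤ)
    (hBRsymm : ∀ x y, BR x y = BR y x)
    (Bt : ((ℤ × ℤ) ⊗[ℤ] R) →ₗ[ℤ] ((ℤ × ℤ) ⊗[ℤ] R) →ₗ[ℤ] ℤ)
    (hBt : ∀ (a a' : ℤ × ℤ) (r r' : R),
      Bt (a ⊗ₜ[ℤ] r) (a' ⊗ₜ[ℤ] r') = B2 a a' * BR r r') :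
    {x : (ℤ × ℤ) ⊗[ℤ] R | ∀ y, (3 : ℤ) ∣ Bt x y} =
      ↑(Submodule.span ℤ {z : (ℤ × ℤ) ⊗[ℤ] R |
            ∃ a ∈ LinearMap.range (LinearMap.id - nuA2), ∃ r : R, z = a ⊗ₜ[ℤ] r} ⊔
        Submodule.span ℤ {z : (ℤ × ℤ) ⊗[ℤ] R |
            ∃ a : ℤ × ℤ, ∃ r : R, (∀ δ : R, (3 : ℤ) ∣ BR r δ) ∧ z = a ⊗ₜ[ℤ] r}) := by
  ext x
  constructor
  · intro hx
    obtain ⟨r1, r2, hxd⟩ := decomp x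
    -- key divisibility
    have key : ∀ δ : R, (3 : ℤ) ∣ BR (r1 + r2) δ := by
      intro δ
      have h1 := hx (((1,0) : ℤ × ℤ) ⊗ₜ[ℤ] δ)
      have h2 := hx (((0,1) : ℤ × ℤ) ⊗ₜ[ℤ] δ)
      rw [hxd, map_add, LinearMap.add_apply, hBt, hBt] at h1 h2
      have e1 : B2 (1,0) (1,0) = 2 := by simp [B2]
      have e2 : B2 (0,1) (1,0) = -1 := by simp [B2]
      have e3 : B2 (1,0) (0,1) = -1 := by simp [B2]
      have e4 : B2 (0,1) (0,1) = 2 := by simp [B2]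
      rw [e1, e2] at h1
      rw [e3, e4] at h2
      rw [map_add, LinearMap.add_apply]
      omega
    rw [SetLike.mem_coe, Submodule.mem_sup]
    refine ⟨((1,-1) : ℤ × ℤ) ⊗ₜ[ℤ] r1, ?_, ((0,1) : ℤ × ℤ) ⊗ₜ[ℤ] (r1 + r2), ?_, ?_⟩
    · exact Submodule.subset_span ⟨(1,-1), ⟨(1,0), by
        simp [nuA2, LinearMap.sub_apply, Prod.ext_iff]⟩, r1, rfl⟩
    · exact Submodule.subset_span ⟨(0,1), r1 + r2, key, rfl⟩
    · have hv : ((1,-1) : ℤ × ℤ) = (1,0) - (0,1) := by simp [Prod.ext_iff]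
      rw [hv, TensorProduct.sub_tmul, TensorProduct.tmul_add, hxd]
      abel
  · intro hx
    set P : Submodule ℤ ((ℤ × ℤ) ⊗[ℤ] R) :=
      { carrier := {x | ∀ y, (3 : ℤ) ∣ Bt x y}
        zero_mem' := by intro y; simp
        add_mem' := by
          intro a b ha hb y
          rw [map_add, LinearMap.add_apply]
          exact dvd_add (ha y) (hb y)
        smul_mem' := by
          intro c a ha y
          rw [map_smul, LinearMap.smul_apply, smul_eq_mul]
          exact (ha y).mul_left c } with hP
    have hgen : ∀ (a : ℤ × ℤ) (r : R),
        (∀ a', (3 : ℤ) ∣ B2 a a') ∨ (∀ δ, (3 : ℤ) ∣ BR r δ) →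
        ∀ y, (3 : ℤ) ∣ Bt (a ⊗ₜ[ℤ] r) y := by
      intro a r h y
      induction y using TensorProduct.induction_on with
      | zero => simp
      | tmul a' r' =>
        rw [hBt]
        rcases h with h | h
        · exact (h a').mul_right _
        · exact (h r').mul_left _
      | add u v hu hv =>
        rw [map_add]
        exact dvd_add hu hv
    have hle : Submodule.span ℤ {z : (ℤ × ℤ) ⊗[ℤ] R |
            ∃ a ∈ LinearMap.range (LinearMap.id - nuA2), ∃ r : R, z = a ⊗ₜ[ℤ] r} ⊔
        Submodule.span ℤ {z : (ℤ × ℤ) ⊗[ℤ] R |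
            ∃ a : ℤ × ℤ, ∃ r : R, (∀ δ : R, (3 : ℤ) ∣ BR r δ) ∧ z = a ⊗ₜ[ℤ] r} ≤ P := by
      refine sup_le (Submodule.span_le.2 ?_) (Submodule.span_le.2 ?_)
      · rintro z ⟨a, ⟨p, rfl⟩, r, rfl⟩
        exact hgen _ r (Or.inl fun a' => b2_dvd p a')
      · rintro z ⟨a, r, hr, rfl⟩
        exact hgen a r (Or.inr hr)
    exact hle hx
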